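/- arXiv:1206.6172 — 2 statements merged into one kernel-verified Lean document; each statement's English description precedes it below -/
import Mathlib

section
/- With the same notation, the residual magnitude satisfies the uniform bound |R_N(y)| ≤ 2^κ exp(η²) exp(-y/(2λ)) for all y ≥ 0 and all N ≥ κ-2; in particular lim_{y→∞} |R_N(y)| = 0. -/
open Finset

/-- `g⁽ⁿ⁾(0,y) = -λ ∑_{k=0}^n (n!/(n-k)!) λ^k y^{n-k}`. -/
noncomputable def gd (lam y : ℝ) (n : ℕ) : ℝ :=
  -lam * ∑ k ∈ Finset.range (n + 1),
      ((n.factorial : ℝ) / ((n - k).factorial : ℝ)) * lam ^ k * y ^ (n - k)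

/-- The `n`-th summand `g⁽ⁿ⁾(0,y) (η²/λ)^{n-κ+1} / (n! (n-κ+1)!)` (ℕ-subtraction:
`n - κ + 1` is written `n + 1 - κ`, which agrees for the relevant `n ≥ κ - 1`). -/
noncomputable def trm (lam η y : ℝ) (kap n : ℕ) : ℝ :=
  gd lam y n * (η ^ 2 / lam) ^ (n + 1 - kap)
    / ((n.factorial : ℝ) * ((n + 1 - kap).factorial : ℝ))

-- negated gd is nonneg
lemma gd_neg_nonneg (lam y : ℝ) (hlam : 0 < lam) (hy : 0 ≤ y) (n : ℕ) :
    0 ≤ -gd lam y n := by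
  unfold gd
  rw [neg_mul, neg_neg]
  apply mul_nonneg hlam.le
  apply Finset.sum_nonneg
  intro k _
  positivity

lemma trm_nonpos (lam η y : ℝ) (hlam : 0 < lam) (hy : 0 ≤ y) (kap n : ℕ) :
    trm lam η y kap n ≤ 0 := by
  unfold trm
  apply div_nonpos_of_nonpos_of_nonneg
  · apply mul_nonpos_of_nonpos_of_nonneg
    · nlinarith [gd_neg_nonneg lam y hlam hy n]
    · positivity
  · positivity

-- Cauchy product expansion
lemma gd_expand (lam y : ℝ) (hlam : 0 < lam) (n : ℕ) :
    -gd lam y n * (1 / (2 * lam)) ^ n / n.factorial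
      = ∑ k ∈ Finset.range (n + 1),
          (lam * (1 / 2 : ℝ) ^ k) * ((y / (2 * lam)) ^ (n - k) / (n - k).factorial) := by
  unfold gd
  simp only [neg_mul, neg_neg]
  rw [Finset.mul_sum, Finset.sum_mul, Finset.sum_div]
  apply Finset.sum_congr rfl
  intro k hk
  rw [Finset.mem_range] at hk
  have hk' : k ≤ n := Nat.lt_succ_iff.mp hk
  have hnk : k + (n - k) = n := Nat.add_sub_cancel' hk'
  have hfac : (n.factorial : ℝ) ≠ 0 := Nat.cast_ne_zero.mpr n.factorial_ne_zero
  have hfac2 : ((n - k).factorial : ℝ) ≠ 0 := Nat.cast_ne_zero.mpr (n - k).factorial_ne_zero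
  have hpow : (1 / (2 * lam)) ^ n = (1 / (2 * lam)) ^ k * (1 / (2 * lam)) ^ (n - k) := by
    rw [← pow_add, hnk]
  rw [hpow]
  have hlam' : lam ≠ 0 := hlam.ne'
  field_simp
  have hk1 : lam ^ k * lam⁻¹ ^ k = 1 := by rw [← mul_pow, mul_inv_cancel₀ hlam', one_pow]
  linear_combination (y ^ (n - k) * lam⁻¹ ^ (n - k) * (1 / 2) ^ k * (1 / 2) ^ (n - k)) * hk1

lemma bnd_summable (lam y : ℝ) (hlam : 0 < lam) (hy : 0 ≤ y) :
    Summable (fun n => -gd lam y n * (1 / (2 * lam)) ^ n / n.factorial)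
    ∧ (∑' n : ℕ, -gd lam y n * (1 / (2 * lam)) ^ n / n.factorial)
        = 2 * lam * Real.exp (y / (2 * lam)) := by
  have hf : Summable (fun k : ℕ => ‖lam * (1 / 2 : ℝ) ^ k‖) := by
    simp only [norm_mul, norm_pow]
    apply Summable.mul_left
    apply summable_geometric_of_lt_one (by positivity)
    rw [Real.norm_eq_abs, abs_of_nonneg (by norm_num : (0:ℝ) ≤ 1/2)]; norm_num
  have hg : Summable (fun m : ℕ => ‖(y / (2 * lam)) ^ m / (m.factorial : ℝ)‖) := by
    have := Real.summable_pow_div_factorial (y / (2 * lam))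
    exact this.abs
  have hcp := hasSum_sum_range_mul_of_summable_norm hf hg
  have heq : ∀ n : ℕ, (∑ k ∈ Finset.range (n + 1),
        (lam * (1 / 2 : ℝ) ^ k) * ((y / (2 * lam)) ^ (n - k) / (n - k).factorial))
      = -gd lam y n * (1 / (2 * lam)) ^ n / n.factorial := fun n => (gd_expand lam y hlam n).symm
  have htf : (∑' k : ℕ, lam * (1 / 2 : ℝ) ^ k) = 2 * lam := by
    rw [tsum_mul_left, tsum_geometric_two]; ring
  have htg : (∑' m : ℕ, (y / (2 * lam)) ^ m / (m.factorial : ℝ)) = Real.exp (y / (2 * lam)) := by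
    rw [Real.exp_eq_exp_ℝ, NormedSpace.exp_eq_tsum_div]
  rw [funext heq, htf, htg] at hcp
  exact ⟨hcp.summable, hcp.tsum_eq⟩

lemma trm_bound (lam η y : ℝ) (hlam : 0 < lam) (hη : 0 ≤ η) (hy : 0 ≤ y)
    (kap : ℕ) (hkap : 1 ≤ kap) (m : ℕ) (hm : kap ≤ m + 1) :
    -trm lam η y kap m
      ≤ Real.exp (2 * η ^ 2) * (2 * lam) ^ (kap - 1)
          * (-gd lam y m * (1 / (2 * lam)) ^ m / m.factorial) := by
  set j := m + 1 - kap with hj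
  have hjm : j + (kap - 1) = m := by omega
  have hG := gd_neg_nonneg lam y hlam hy m
  have key : (η ^ 2 / lam) ^ j / (j.factorial : ℝ)
      ≤ Real.exp (2 * η ^ 2) * (2 * lam) ^ (kap - 1) * (1 / (2 * lam)) ^ m := by
    have h1 : (η ^ 2 / lam) ^ j = (2 * η ^ 2) ^ j * (1 / (2 * lam)) ^ j := by
      rw [← mul_pow]
      congr 1
      field_simp
    have h2 : (2 * η ^ 2) ^ j / (j.factorial : ℝ) ≤ Real.exp (2 * η ^ 2) :=
      Real.pow_div_factorial_le_exp (x := 2 * η ^ 2) (by positivity) j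
    have h3 : (1 / (2 * lam)) ^ m = (1 / (2 * lam)) ^ j * (1 / (2 * lam)) ^ (kap - 1) := by
      rw [← pow_add, hjm]
    have h4 : (2 * lam) ^ (kap - 1) * (1 / (2 * lam)) ^ m = (1 / (2 * lam)) ^ j := by
      rw [h3]
      have hc : (2 * lam) ^ (kap - 1) * (1 / (2 * lam)) ^ (kap - 1) = 1 := by
        rw [← mul_pow, mul_one_div_cancel (by positivity), one_pow]
      linear_combination (1 / (2 * lam)) ^ j * hc
    calc (η ^ 2 / lam) ^ j / (j.factorial : ℝ)
        = ((2 * η ^ 2) ^ j / (j.factorial : ℝ)) * (1 / (2 * lam)) ^ j := by rw [h1]; ring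
      _ ≤ Real.exp (2 * η ^ 2) * (1 / (2 * lam)) ^ j :=
          mul_le_mul_of_nonneg_right h2 (by positivity)
      _ = Real.exp (2 * η ^ 2) * ((2 * lam) ^ (kap - 1) * (1 / (2 * lam)) ^ m) := by rw [h4]
      _ = Real.exp (2 * η ^ 2) * (2 * lam) ^ (kap - 1) * (1 / (2 * lam)) ^ m := by ring
  have hexpand : -trm lam η y kap m
      = (-gd lam y m / m.factorial) * ((η ^ 2 / lam) ^ j / (j.factorial : ℝ)) := by
    unfold trm
    rw [← hj]
    ring
  rw [hexpand]
  have hrhs : Real.exp (2 * η ^ 2) * (2 * lam) ^ (kap - 1)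
        * (-gd lam y m * (1 / (2 * lam)) ^ m / m.factorial)
      = (-gd lam y m / m.factorial)
        * (Real.exp (2 * η ^ 2) * (2 * lam) ^ (kap - 1) * (1 / (2 * lam)) ^ m) := by
    ring
  rw [hrhs]
  exact mul_le_mul_of_nonneg_left key (by positivity)


/-- `R_N(y) = (e^{-η²}/λ^κ) e^{-y/λ} ∑_{n=N+1}^∞ g⁽ⁿ⁾(0,y)(η²/λ)^{n-κ+1}/(n!(n-κ+1)!)`. -/
noncomputable def Rres (lam η : ℝ) (kap N : ℕ) (y : ℝ) : ℝ :=
  Real.exp (-η ^ 2) / lam ^ kap * Real.exp (-y / lam)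
    * ∑' n : ℕ, trm lam η y kap (N + 1 + n)

/-- Uniform residual bound `|R_N(y)| ≤ 2^κ e^{η²} e^{-y/(2λ)}` for all `y ≥ 0` and
all `N ≥ κ-2`; in particular `|R_N(y)| → 0` as `y → ∞`. -/
theorem stmt7 (lam η : ℝ) (hlam : 0 < lam) (hη : 0 ≤ η) (kap : ℕ) (hkap : 1 ≤ kap)
    (hsum : ∀ y : ℝ, 0 ≤ y → Summable (fun n : ℕ => trm lam η y kap n)) :
    (∀ N : ℕ, kap ≤ N + 2 → ∀ y : ℝ, 0 ≤ y →
        |Rres lam η kap N y|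
          ≤ 2 ^ kap * Real.exp (η ^ 2) * Real.exp (-y / (2 * lam)))
    ∧ (∀ N : ℕ, kap ≤ N + 2 →
        Filter.Tendsto (fun y : ℝ => |Rres lam η kap N y|) Filter.atTop (nhds 0)) := by
  have hbound : ∀ N : ℕ, kap ≤ N + 2 → ∀ y : ℝ, 0 ≤ y →
      |Rres lam η kap N y|
        ≤ 2 ^ kap * Real.exp (η ^ 2) * Real.exp (-y / (2 * lam)) := by
    intro N hN y hy
    set C := Real.exp (2 * η ^ 2) * (2 * lam) ^ (kap - 1) with hCdef
    have hC : 0 ≤ C := by positivity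
    obtain ⟨hBsum, hBtsum⟩ := bnd_summable lam y hlam hy
    have hinj : Function.Injective (fun n : ℕ => N + 1 + n) := fun a b h => by
      simpa using h
    have hS : Summable (fun n : ℕ => trm lam η y kap (N + 1 + n)) :=
      (hsum y hy).comp_injective hinj
    have hT_nonpos : (∑' n : ℕ, trm lam η y kap (N + 1 + n)) ≤ 0 :=
      tsum_nonpos fun n => trm_nonpos lam η y hlam hy kap _
    have habsT : |∑' n : ℕ, trm lam η y kap (N + 1 + n)|
        = ∑' n : ℕ, -trm lam η y kap (N + 1 + n) := by
      rw [abs_of_nonpos hT_nonpos, ← tsum_neg]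
    have hle : (∑' n : ℕ, -trm lam η y kap (N + 1 + n))
        ≤ ∑' m : ℕ, C * (-gd lam y m * (1 / (2 * lam)) ^ m / m.factorial) := by
      apply Summable.tsum_le_tsum_of_inj (fun n : ℕ => N + 1 + n) hinj
      · intro c _
        have := gd_neg_nonneg lam y hlam hy c
        positivity
      · intro n
        exact trm_bound lam η y hlam hη hy kap hkap (N + 1 + n) (by omega)
      · exact hS.neg
      · exact hBsum.mul_left C
    have htsumC : (∑' m : ℕ, C * (-gd lam y m * (1 / (2 * lam)) ^ m / m.factorial))
        = C * (2 * lam * Real.exp (y / (2 * lam))) := by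
      rw [tsum_mul_left, hBtsum]
    have hpre : 0 ≤ Real.exp (-η ^ 2) / lam ^ kap * Real.exp (-y / lam) := by positivity
    have e1 : Real.exp (-η ^ 2) * Real.exp (2 * η ^ 2) = Real.exp (η ^ 2) := by
      rw [← Real.exp_add]; ring_nf
    have e2 : Real.exp (-y / lam) * Real.exp (y / (2 * lam)) = Real.exp (-y / (2 * lam)) := by
      rw [← Real.exp_add]; congr 1; field_simp; ring
    have e3 : (2 * lam) ^ (kap - 1) * (2 * lam) = (2 * lam) ^ kap := by
      rw [← pow_succ]; congr 1; omega
    have final : Real.exp (-η ^ 2) / lam ^ kap * Real.exp (-y / lam)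
          * (C * (2 * lam * Real.exp (y / (2 * lam))))
        = 2 ^ kap * Real.exp (η ^ 2) * Real.exp (-y / (2 * lam)) := by
      rw [hCdef]
      rw [show Real.exp (2 * η ^ 2) * (2 * lam) ^ (kap - 1)
            * (2 * lam * Real.exp (y / (2 * lam)))
          = (2 * lam) ^ kap * (Real.exp (2 * η ^ 2) * Real.exp (y / (2 * lam))) from by
        rw [← e3]; ring]
      rw [mul_pow, ← e1, ← e2]
      have hl : (lam : ℝ) ^ kap ≠ 0 := by positivity
      field_simp
    calc |Rres lam η kap N y|
        = Real.exp (-η ^ 2) / lam ^ kap * Real.exp (-y / lam)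
            * |∑' n : ℕ, trm lam η y kap (N + 1 + n)| := by
          unfold Rres
          rw [abs_mul, abs_of_nonneg hpre]
      _ ≤ Real.exp (-η ^ 2) / lam ^ kap * Real.exp (-y / lam)
            * (C * (2 * lam * Real.exp (y / (2 * lam)))) := by
          apply mul_le_mul_of_nonneg_left _ hpre
          rw [habsT, ← htsumC]
          exact hle
      _ = 2 ^ kap * Real.exp (η ^ 2) * Real.exp (-y / (2 * lam)) := final
  refine ⟨hbound, fun N hN => ?_⟩
  have h2l : (0 : ℝ) < 2 * lam := by positivity
  have hd : Filter.Tendsto (fun y : ℝ => -y / (2 * lam)) Filter.atTop Filter.atBot :=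
    Filter.Tendsto.atBot_div_const h2l Filter.tendsto_neg_atTop_atBot
  have hexp : Filter.Tendsto (fun y : ℝ => Real.exp (-y / (2 * lam)))
      Filter.atTop (nhds 0) := Real.tendsto_exp_atBot.comp hd
  have hg : Filter.Tendsto
      (fun y : ℝ => 2 ^ kap * Real.exp (η ^ 2) * Real.exp (-y / (2 * lam)))
      Filter.atTop (nhds 0) := by
    simpa using hexp.const_mul (2 ^ kap * Real.exp (η ^ 2))
  apply squeeze_zero' (Filter.Eventually.of_forall fun y => abs_nonneg _)
    _ hg
  filter_upwards [Filter.eventually_ge_atTop (0 : ℝ)] with y hy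
  exact hbound N hN y hy
end

section
/- The derivative of the residual with respect to y is ∂R_N(y)/∂y = (exp(-η²)/λ^κ) exp(-y/λ) Σ_{n=N+1}^{∞} (η²/λ)^{n-κ+1} y^n / (n!(n-κ+1)!), which is nonnegative for y ≥ 0 (strictly positive when y > 0 and η > 0); hence |R_N(y)| is monotonically non-increasing in y. -/
open Finset

noncomputable def ep (n : ℕ) (x : ℝ) : ℝ :=
  ∑ j ∈ Finset.range (n + 1), x ^ j / (j.factorial : ℝ)

lemma ep_zero (n : ℕ) : ep n 0 = 1 := by
  rw [ep, Finset.sum_range_succ']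
  simp

lemma ep_nonneg (n : ℕ) {x : ℝ} (hx : 0 ≤ x) : 0 ≤ ep n x := by
  apply Finset.sum_nonneg
  intro j _
  positivity

lemma ep_hasDerivAt (n : ℕ) (x : ℝ) :
    HasDerivAt (ep n) (∑ j ∈ Finset.range n, x ^ j / (j.factorial : ℝ)) x := by
  have h : ∀ j ∈ Finset.range (n + 1),
      HasDerivAt (fun x : ℝ => x ^ j / (j.factorial : ℝ))
        ((j : ℝ) * x ^ (j - 1) / (j.factorial : ℝ)) x := by
    intro j _
    simpa using (hasDerivAt_pow j x).div_const (j.factorial : ℝ)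
  have h2 := HasDerivAt.fun_sum h
  have h3 : (∑ j ∈ Finset.range (n + 1), (j : ℝ) * x ^ (j - 1) / (j.factorial : ℝ))
      = ∑ j ∈ Finset.range n, x ^ j / (j.factorial : ℝ) := by
    rw [Finset.sum_range_succ']
    simp only [Nat.cast_zero, zero_mul, Nat.factorial_zero, Nat.cast_one, zero_div, add_zero]
    apply Finset.sum_congr rfl
    intro j _
    have hfac : ((j + 1).factorial : ℝ) = (j + 1 : ℝ) * (j.factorial : ℝ) := by
      rw [Nat.factorial_succ]; push_cast; ring
    have hj1 : ((j : ℝ) + 1) ≠ 0 := by positivity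
    have hfj : (j.factorial : ℝ) ≠ 0 := Nat.cast_ne_zero.mpr j.factorial_ne_zero
    have h1 : j + 1 - 1 = j := rfl
    rw [h1, hfac]
    push_cast
    field_simp
  rw [h3] at h2
  exact h2

noncomputable def FF (lam : ℝ) (n : ℕ) (y : ℝ) : ℝ := Real.exp (-y / lam) * ep n (y / lam)

lemma FF_hasDerivAt (lam : ℝ) (n : ℕ) (y : ℝ) :
    HasDerivAt (FF lam n)
      (-(1 / lam) * Real.exp (-y / lam) * (y / lam) ^ n / (n.factorial : ℝ)) y := by
  have h1 : HasDerivAt (fun y : ℝ => -y / lam) (-1 / lam) y := by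
    simpa using (hasDerivAt_id y).neg.div_const lam
  have h2 : HasDerivAt (fun y : ℝ => Real.exp (-y / lam))
      (Real.exp (-y / lam) * (-1 / lam)) y := h1.exp
  have h3 : HasDerivAt (fun y : ℝ => y / lam) (1 / lam) y := by
    simpa using (hasDerivAt_id y).div_const lam
  have h4 : HasDerivAt (fun y : ℝ => ep n (y / lam))
      ((∑ j ∈ Finset.range n, (y / lam) ^ j / (j.factorial : ℝ)) * (1 / lam)) y :=
    by have := (ep_hasDerivAt n (y / lam)).comp y h3; exact this
  have h5 := h2.fun_mul h4
  have hep : ep n (y / lam)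
      = (∑ j ∈ Finset.range n, (y / lam) ^ j / (j.factorial : ℝ))
          + (y / lam) ^ n / (n.factorial : ℝ) := by
    rw [ep, Finset.sum_range_succ]
  refine h5.congr_deriv ?_
  rw [hep]
  ring

lemma trm_eq (lam η y : ℝ) (hlam : lam ≠ 0) (kap n : ℕ) (h : kap ≤ n + 1) :
    trm lam η y kap n
      = -(lam ^ kap * ((η ^ 2) ^ (n + 1 - kap) / (((n + 1 - kap).factorial : ℝ)))
          * ep n (y / lam)) := by
  have hre : ∑ k ∈ Finset.range (n + 1),
        ((n.factorial : ℝ) / ((n - k).factorial : ℝ)) * lam ^ k * y ^ (n - k)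
      = ∑ j ∈ Finset.range (n + 1),
        ((n.factorial : ℝ) / ((j).factorial : ℝ)) * lam ^ (n - j) * y ^ j := by
    rw [← Finset.sum_range_reflect]
    apply Finset.sum_congr rfl
    intro j hj
    have hj' : j ≤ n := Nat.lt_succ_iff.mp (Finset.mem_range.mp hj)
    have e1 : n + 1 - 1 - j = n - j := by omega
    have e2 : n - (n - j) = j := by omega
    rw [e1, e2]
  have hgd : gd lam y n = -(lam ^ (n + 1) * (n.factorial : ℝ) * ep n (y / lam)) := by
    have key : lam * ∑ j ∈ Finset.range (n + 1),
          ((n.factorial : ℝ) / ((j).factorial : ℝ)) * lam ^ (n - j) * y ^ j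
        = lam ^ (n + 1) * (n.factorial : ℝ)
            * ∑ j ∈ Finset.range (n + 1), (y / lam) ^ j / (j.factorial : ℝ) := by
      rw [Finset.mul_sum, Finset.mul_sum]
      apply Finset.sum_congr rfl
      intro j hj
      have hj' : j ≤ n := Nat.lt_succ_iff.mp (Finset.mem_range.mp hj)
      have hfj : (j.factorial : ℝ) ≠ 0 := Nat.cast_ne_zero.mpr j.factorial_ne_zero
      have hpow : lam ^ (n + 1) = lam * lam ^ (n - j) * lam ^ j := by
        rw [mul_assoc, ← pow_add, ← pow_succ']
        congr 1
        omega
      rw [div_pow, hpow]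
      field_simp
    rw [gd, hre, ep, neg_mul, key]
  rw [trm, hgd]
  have hfn : (n.factorial : ℝ) ≠ 0 := Nat.cast_ne_zero.mpr n.factorial_ne_zero
  have hfm : ((n + 1 - kap).factorial : ℝ) ≠ 0 := Nat.cast_ne_zero.mpr (n + 1 - kap).factorial_ne_zero
  have hpow : lam ^ (n + 1) = lam ^ kap * lam ^ (n + 1 - kap) := by
    rw [← pow_add]
    congr 1
    omega
  rw [div_pow, hpow]
  field_simp

noncomputable def cc (η : ℝ) (M j : ℕ) : ℝ := (η ^ 2) ^ (M + j) / ((M + j).factorial : ℝ)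

noncomputable def ff (lam η : ℝ) (M N j : ℕ) (y : ℝ) : ℝ := cc η M j * FF lam (N + 1 + j) y

noncomputable def ffd (lam η : ℝ) (M N j : ℕ) (y : ℝ) : ℝ :=
  cc η M j * (-(1 / lam) * Real.exp (-y / lam) * (y / lam) ^ (N + 1 + j)
      / (((N + 1 + j).factorial : ℝ)))

lemma cc_nonneg (η : ℝ) (M j : ℕ) : 0 ≤ cc η M j := by unfold cc; positivity

lemma cc_summable (η : ℝ) (M : ℕ) : Summable (cc η M) := by
  have h := Real.summable_pow_div_factorial (η ^ 2)
  exact h.comp_injective fun a b hab => by omega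

lemma ff_hasDerivAt (lam η : ℝ) (M N j : ℕ) (y : ℝ) :
    HasDerivAt (ff lam η M N j) (ffd lam η M N j y) y :=
  (FF_hasDerivAt lam (N + 1 + j) y).const_mul (cc η M j)

lemma ffd_bound (lam η : ℝ) (hlam : 0 < lam) (M N j : ℕ) (y : ℝ) (hy : -1 < y) :
    ‖ffd lam η M N j y‖ ≤ cc η M j * ((1 / lam) * Real.exp (2 / lam)) := by
  have hcc := cc_nonneg η M j
  rw [ffd, Real.norm_eq_abs, abs_mul, abs_of_nonneg hcc]
  apply mul_le_mul_of_nonneg_left _ hcc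
  set n := N + 1 + j with hn
  have hfn : (0:ℝ) < (n.factorial : ℝ) := by positivity
  rw [abs_div, abs_mul, abs_mul, abs_neg,
    abs_of_nonneg (le_of_lt (one_div_pos.mpr hlam)),
    abs_of_nonneg (Real.exp_pos _).le, abs_pow, Nat.abs_cast]
  have key : Real.exp (-y / lam) * (|y / lam| ^ n / (n.factorial : ℝ))
      ≤ Real.exp (2 / lam) := by
    have t1 : |y / lam| ^ n / (n.factorial : ℝ) ≤ Real.exp |y / lam| :=
      Real.pow_div_factorial_le_exp _ (abs_nonneg _) n
    have t2 : Real.exp (-y / lam) * (|y / lam| ^ n / (n.factorial : ℝ))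
        ≤ Real.exp (-y / lam) * Real.exp |y / lam| :=
      mul_le_mul_of_nonneg_left t1 (Real.exp_pos _).le
    refine t2.trans ?_
    rw [← Real.exp_add]
    apply Real.exp_le_exp.mpr
    have hab : |y / lam| = |y| / lam := by rw [abs_div, abs_of_pos hlam]
    rw [hab]
    have he : -y / lam + |y| / lam = (|y| - y) / lam := by ring
    rw [he]
    gcongr
    cases abs_cases y <;> linarith
  calc 1 / lam * Real.exp (-y / lam) * |y / lam| ^ n / (n.factorial : ℝ)
      = 1 / lam * (Real.exp (-y / lam) * (|y / lam| ^ n / (n.factorial : ℝ))) := by ring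
    _ ≤ 1 / lam * Real.exp (2 / lam) :=
        mul_le_mul_of_nonneg_left key (le_of_lt (one_div_pos.mpr hlam))

lemma Rres_eq (lam η : ℝ) (hlam : lam ≠ 0) (kap N : ℕ) (hN : kap ≤ N + 2) (y : ℝ) :
    Rres lam η kap N y
      = -Real.exp (-η ^ 2) * ∑' j : ℕ, ff lam η (N + 2 - kap) N j y := by
  have h1 : ∀ j : ℕ, trm lam η y kap (N + 1 + j)
      = -lam ^ kap * (cc η (N + 2 - kap) j * ep (N + 1 + j) (y / lam)) := by
    intro j
    rw [trm_eq lam η y hlam kap (N + 1 + j) (by omega)]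
    have he : N + 1 + j + 1 - kap = N + 2 - kap + j := by omega
    rw [he]
    unfold cc
    ring
  have h2 : (∑' j : ℕ, trm lam η y kap (N + 1 + j))
      = -lam ^ kap * ∑' j : ℕ, cc η (N + 2 - kap) j * ep (N + 1 + j) (y / lam) := by
    rw [← tsum_mul_left]
    exact tsum_congr h1
  have h3 : (∑' j : ℕ, ff lam η (N + 2 - kap) N j y)
      = Real.exp (-y / lam)
          * ∑' j : ℕ, cc η (N + 2 - kap) j * ep (N + 1 + j) (y / lam) := by
    rw [← tsum_mul_left]
    apply tsum_congr
    intro j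
    rw [ff, FF]
    ring
  rw [Rres, h2, h3]
  have hpk : (lam : ℝ) ^ kap ≠ 0 := pow_ne_zero _ hlam
  field_simp

lemma Rres_hasDerivAt (lam η : ℝ) (hlam : 0 < lam) (kap N : ℕ) (hN : kap ≤ N + 2)
    (y : ℝ) (hy : -1 < y) :
    HasDerivAt (Rres lam η kap N)
      (-Real.exp (-η ^ 2) * ∑' j : ℕ, ffd lam η (N + 2 - kap) N j y) y := by
  set M := N + 2 - kap with hM
  have hu : Summable (fun j => cc η M j * ((1 / lam) * Real.exp (2 / lam))) :=
    (cc_summable η M).mul_right _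
  have hd : ∀ (j : ℕ) (z : ℝ), z ∈ Set.Ioi (-1 : ℝ) →
      HasDerivAt (ff lam η M N j) (ffd lam η M N j z) z :=
    fun j z _ => ff_hasDerivAt lam η M N j z
  have hb : ∀ (j : ℕ) (z : ℝ), z ∈ Set.Ioi (-1 : ℝ) →
      ‖ffd lam η M N j z‖ ≤ cc η M j * ((1 / lam) * Real.exp (2 / lam)) :=
    fun j z hz => ffd_bound lam η hlam M N j z hz
  have h0 : Summable (fun j => ff lam η M N j 0) := by
    have he : (fun j => ff lam η M N j 0) = cc η M := by
      funext j
      rw [ff, FF]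
      simp [ep_zero]
    rw [he]; exact cc_summable η M
  have hmain : HasDerivAt (fun z => ∑' j : ℕ, ff lam η M N j z)
      (∑' j : ℕ, ffd lam η M N j y) y :=
    hasDerivAt_tsum_of_isPreconnected hu isOpen_Ioi isPreconnected_Ioi hd hb
      (by norm_num : (0:ℝ) ∈ Set.Ioi (-1 : ℝ)) h0 (Set.mem_Ioi.mpr hy)
  have hfin := hmain.const_mul (-Real.exp (-η ^ 2))
  have heq : Rres lam η kap N
      = fun z => -Real.exp (-η ^ 2) * ∑' j : ℕ, ff lam η M N j z :=
    funext fun z => Rres_eq lam η (ne_of_gt hlam) kap N hN z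
  rw [heq]
  exact hfin

/-- The derivative of the residual:
`∂R_N(y)/∂y = (e^{-η²}/λ^κ) e^{-y/λ} ∑_{n=N+1}^∞ (η²/λ)^{n-κ+1} yⁿ/(n!(n-κ+1)!)`,
which is nonnegative for `y ≥ 0` and strictly positive when `y > 0` and `η > 0`;
hence `|R_N(y)|` is monotonically non-increasing in `y`. -/
theorem stmt8 (lam η : ℝ) (hlam : 0 < lam) (hη : 0 ≤ η) (kap N : ℕ)
    (hkap : 1 ≤ kap) (hN : kap ≤ N + 2)
    (hsum : ∀ y : ℝ, 0 ≤ y → Summable (fun n : ℕ => trm lam η y kap n)) :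
    (∀ y : ℝ, 0 ≤ y →
        deriv (Rres lam η kap N) y
          = Real.exp (-η ^ 2) / lam ^ kap * Real.exp (-y / lam)
              * ∑' n : ℕ, (η ^ 2 / lam) ^ (N + 1 + n + 1 - kap) * y ^ (N + 1 + n)
                  / (((N + 1 + n).factorial : ℝ) * ((N + 1 + n + 1 - kap).factorial : ℝ)))
    ∧ (∀ y : ℝ, 0 ≤ y → 0 ≤ deriv (Rres lam η kap N) y)
    ∧ (∀ y : ℝ, 0 < y → 0 < η → 0 < deriv (Rres lam η kap N) y)
    ∧ (∀ y₁ y₂ : ℝ, 0 ≤ y₁ → y₁ ≤ y₂ →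
        |Rres lam η kap N y₂| ≤ |Rres lam η kap N y₁|) := by
  have hlam0 : lam ≠ 0 := ne_of_gt hlam
  set M := N + 2 - kap with hM
  have hidx : ∀ j : ℕ, N + 1 + j + 1 - kap = M + j := fun j => by omega
  have hderiv : ∀ y : ℝ, -1 < y →
      deriv (Rres lam η kap N) y
        = -Real.exp (-η ^ 2) * ∑' j : ℕ, ffd lam η M N j y :=
    fun y hy => (Rres_hasDerivAt lam η hlam kap N hN y hy).deriv
  -- termwise identity between `ffd` and the target summand
  have h2 : ∀ (y : ℝ) (j : ℕ), ffd lam η M N j y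
      = -(Real.exp (-y / lam) / lam ^ kap) *
          ((η ^ 2 / lam) ^ (M + j) * y ^ (N + 1 + j)
            / (((N + 1 + j).factorial : ℝ) * ((M + j).factorial : ℝ))) := by
    intro y j
    have hsplit : lam ^ (N + 1 + j) * lam = lam ^ kap * lam ^ (M + j) := by
      rw [← pow_succ, ← pow_add]
      congr 1
      omega
    rw [ffd]
    unfold cc
    rw [div_pow, div_pow]
    have hfn : ((N + 1 + j).factorial : ℝ) ≠ 0 :=
      Nat.cast_ne_zero.mpr (N + 1 + j).factorial_ne_zero
    have hfm : ((M + j).factorial : ℝ) ≠ 0 :=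
      Nat.cast_ne_zero.mpr (M + j).factorial_ne_zero
    have hpk : lam ^ kap ≠ 0 := pow_ne_zero _ hlam0
    have hpn : lam ^ (N + 1 + j) ≠ 0 := pow_ne_zero _ hlam0
    have hpm : lam ^ (M + j) ≠ 0 := pow_ne_zero _ hlam0
    field_simp
    linear_combination ((η ^ 2) ^ (M + j) * y ^ (N + 1 + j)) * hsplit
  -- Part 1
  have part1 : ∀ y : ℝ, 0 ≤ y →
      deriv (Rres lam η kap N) y
        = Real.exp (-η ^ 2) / lam ^ kap * Real.exp (-y / lam)
            * ∑' n : ℕ, (η ^ 2 / lam) ^ (N + 1 + n + 1 - kap) * y ^ (N + 1 + n)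
                / (((N + 1 + n).factorial : ℝ) * ((N + 1 + n + 1 - kap).factorial : ℝ)) := by
    intro y hy
    rw [hderiv y (by linarith)]
    simp only [hidx]
    have h4 : (∑' j : ℕ, ffd lam η M N j y)
        = -(Real.exp (-y / lam) / lam ^ kap) *
            ∑' j : ℕ, (η ^ 2 / lam) ^ (M + j) * y ^ (N + 1 + j)
              / (((N + 1 + j).factorial : ℝ) * ((M + j).factorial : ℝ)) := by
      rw [← tsum_mul_left]
      exact tsum_congr (h2 y)
    rw [h4]
    ring
  -- Part 2
  have part2 : ∀ y : ℝ, 0 ≤ y → 0 ≤ deriv (Rres lam η kap N) y := by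
    intro y hy
    rw [hderiv y (by linarith)]
    have hnp : ∀ j : ℕ, ffd lam η M N j y ≤ 0 := by
      intro j
      rw [ffd]
      apply mul_nonpos_of_nonneg_of_nonpos (cc_nonneg _ _ _)
      apply div_nonpos_of_nonpos_of_nonneg _ (by positivity)
      have hp : (0:ℝ) ≤ (y / lam) ^ (N + 1 + j) := by positivity
      have h1 : (0:ℝ) ≤ 1 / lam * Real.exp (-y / lam) * (y / lam) ^ (N + 1 + j) := by
        positivity
      nlinarith
    have hS : (∑' j : ℕ, ffd lam η M N j y) ≤ 0 := tsum_nonpos hnp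
    nlinarith [Real.exp_pos (-η ^ 2)]
  -- Part 3
  have part3 : ∀ y : ℝ, 0 < y → 0 < η → 0 < deriv (Rres lam η kap N) y := by
    intro y hy hη'
    rw [hderiv y (by linarith)]
    have hsumd : Summable (fun j => ffd lam η M N j y) :=
      Summable.of_norm_bounded ((cc_summable η M).mul_right _)
        (fun j => ffd_bound lam η hlam M N j y (by linarith))
    have hterm_nonneg : ∀ j : ℕ, 0 ≤ -ffd lam η M N j y := by
      intro j
      have hp : (0:ℝ) ≤ (y / lam) ^ (N + 1 + j) := by positivity
      have h1 : ffd lam η M N j y ≤ 0 := by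
        rw [ffd]
        apply mul_nonpos_of_nonneg_of_nonpos (cc_nonneg _ _ _)
        apply div_nonpos_of_nonpos_of_nonneg _ (by positivity)
        have h1 : (0:ℝ) ≤ 1 / lam * Real.exp (-y / lam) * (y / lam) ^ (N + 1 + j) := by
          positivity
        nlinarith
      linarith
    have hterm0 : 0 < -ffd lam η M N 0 y := by
      have he : -ffd lam η M N 0 y
          = (η ^ 2) ^ (M + 0) / ((M + 0).factorial : ℝ)
            * (1 / lam * Real.exp (-y / lam) * (y / lam) ^ (N + 1 + 0)
                / ((N + 1 + 0).factorial : ℝ)) := by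
        rw [ffd]
        unfold cc
        ring
      rw [he]
      positivity
    have key : 0 < ∑' j : ℕ, -ffd lam η M N j y :=
      Summable.tsum_pos hsumd.neg hterm_nonneg 0 hterm0
    rw [tsum_neg] at key
    nlinarith [Real.exp_pos (-η ^ 2)]
  -- Part 4
  have part4 : ∀ y₁ y₂ : ℝ, 0 ≤ y₁ → y₁ ≤ y₂ →
      |Rres lam η kap N y₂| ≤ |Rres lam η kap N y₁| := by
    intro y₁ y₂ hy₁ h12
    have hy₂ : (0:ℝ) ≤ y₂ := le_trans hy₁ h12
    have hnonpos : ∀ y : ℝ, 0 ≤ y → Rres lam η kap N y ≤ 0 := by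
      intro y hy
      rw [Rres_eq lam η hlam0 kap N hN y]
      have hS : 0 ≤ ∑' j : ℕ, ff lam η (N + 2 - kap) N j y := by
        apply tsum_nonneg
        intro j
        rw [ff, FF]
        have hep := ep_nonneg (N + 1 + j) (show 0 ≤ y / lam by positivity)
        have hcc := cc_nonneg η (N + 2 - kap) j
        positivity
      nlinarith [Real.exp_pos (-η ^ 2)]
    have hmono : MonotoneOn (Rres lam η kap N) (Set.Ici (0:ℝ)) := by
      apply monotoneOn_of_deriv_nonneg (convex_Ici 0)
      · intro y hy
        have hy' : (0:ℝ) ≤ y := hy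
        exact (Rres_hasDerivAt lam η hlam kap N hN y (by linarith)).continuousAt.continuousWithinAt
      · intro y hy
        rw [interior_Ici] at hy
        have hy' : (0:ℝ) < y := hy
        exact (Rres_hasDerivAt lam η hlam kap N hN y (by linarith)).differentiableAt.differentiableWithinAt
      · intro y hy
        rw [interior_Ici] at hy
        exact part2 y (le_of_lt hy)
    rw [abs_of_nonpos (hnonpos y₂ hy₂), abs_of_nonpos (hnonpos y₁ hy₁)]
    exact neg_le_neg (hmono (Set.mem_Ici.mpr hy₁) (Set.mem_Ici.mpr hy₂) h12)
  exact ⟨part1, part2, part3, part4⟩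
end
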